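/- Let T be a locally finite rooted tree and (κ_e)_{e∈E} nonnegative capacities. The enhanced Max-Flow Min-Cut theorem holds: MaxFlow(0→∞, ⟨κ_e⟩) = inf{ Σ_{e∈Π} κ_e : Π a cutset separating the root 0 from infinity }. -/

import Mathlib

open scoped ENNReal NNReal Classical

/-- A locally finite rooted tree, encoded by a parent function: every vertex eventually
reaches the root by iterating `parent`, and every vertex has finitely many children.
Non-root vertices are identified with the edge joining them to their parent. -/
structure GrowingTree where
  V : Type
  root : V
  parent : V → V
  parent_root : parent root = root
  reaches_root : ∀ v, ∃ n, parent^[n] v = root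
  locallyFinite : ∀ v, {w | parent w = v ∧ w ≠ root}.Finite

namespace GrowingTree

variable (T : GrowingTree)

/-- The children of a vertex. -/
noncomputable def children (v : T.V) : Finset T.V := (T.locallyFinite v).toFinset

/-- The depth (distance from the root) of a vertex. -/
noncomputable def depth (v : T.V) : ℕ := Nat.find (T.reaches_root v)

/-- A flow from the root to infinity: at every vertex the value (the flow through the
edge above the vertex, resp. the strength at the root) equals the total flow to the
children. -/
def IsFlow (θ : T.V → ℝ≥0) : Prop :=
  ∀ v, θ v = ∑ w ∈ T.children v, θ w

/-- The strength of a flow: the total outflow from the root. -/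
def strength (θ : T.V → ℝ≥0) : ℝ≥0 := θ T.root

/-- A flow respects the capacities `κ` if it is bounded by `κ` on every edge
(i.e. at every non-root vertex). -/
def Respects (θ : T.V → ℝ≥0) (κ : T.V → ℝ≥0) : Prop :=
  ∀ v, v ≠ T.root → θ v ≤ κ v

/-- The maximal flow from the root to infinity with respect to capacities `κ`. -/
noncomputable def maxFlow (κ : T.V → ℝ≥0) : ℝ≥0∞ :=
  ⨆ θ : {θ : T.V → ℝ≥0 // T.IsFlow θ ∧ T.Respects θ κ}, (T.strength θ.1 : ℝ≥0∞)

/-- An infinite self-avoiding path starting at the root. -/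
def IsRay (r : ℕ → T.V) : Prop :=
  r 0 = T.root ∧ ∀ n, T.parent (r (n + 1)) = r n ∧ r (n + 1) ≠ T.root

/-- A cutset separating the root from infinity: a set of edges (non-root vertices) met by
every infinite self-avoiding path starting at the root. -/
def IsCutset (C : Set T.V) : Prop :=
  T.root ∉ C ∧ ∀ r : ℕ → T.V, T.IsRay r → ∃ n, r (n + 1) ∈ C

/-- The total capacity of a cutset. -/
noncomputable def cutsetSum (κ : T.V → ℝ≥0) (C : Set T.V) : ℝ≥0∞ :=
  ∑' v : C, (κ v.1 : ℝ≥0∞)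

/-- The minimum of the capacities along the path from the root to an edge (inclusive). -/
noncomputable def minCap (κ : T.V → ℝ≥0) (v : T.V) : ℝ≥0 :=
  if h : v = T.root then κ v
  else
    (Finset.range (T.depth v)).inf'
      (by
        rw [Finset.nonempty_range_iff]
        intro h0
        apply h
        have hs : T.parent^[T.depth v] v = T.root := Nat.find_spec (T.reaches_root v)
        rw [h0] at hs
        simpa using hs)
      (fun k => κ (T.parent^[k] v))

/-- The energy of a flow. -/
noncomputable def energy (θ : T.V → ℝ≥0) : ℝ≥0∞ :=
  ∑' v : {v : T.V // v ≠ T.root}, ((θ v.1 : ℝ≥0∞)) ^ 2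

end GrowingTree


open Filter Topology

namespace MFMC

variable (T : GrowingTree)

lemma sum_biUnion_le {α β : Type*} (s : Finset α) (t : α → Finset β) (f : β → ℝ≥0) :
    ∑ x ∈ s.biUnion t, f x ≤ ∑ a ∈ s, ∑ x ∈ t a, f x := by
  classical
  induction s using Finset.induction_on with
  | empty => simp
  | @insert a s ha ih =>
    rw [Finset.biUnion_insert, Finset.sum_insert ha]
    calc ∑ x ∈ t a ∪ s.biUnion t, f x
        ≤ ∑ x ∈ t a, f x + ∑ x ∈ s.biUnion t \ t a, f x := by
          rw [Finset.union_comm, ← Finset.sum_union (Finset.sdiff_disjoint).symm]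
          exact Finset.sum_le_sum_of_subset (by
            intro x hx
            simp only [Finset.mem_union, Finset.mem_sdiff] at hx ⊢
            tauto)
    _ ≤ ∑ x ∈ t a, f x + ∑ a ∈ s, ∑ x ∈ t a, f x :=
          add_le_add le_rfl ((Finset.sum_le_sum_of_subset (Finset.sdiff_subset)).trans ih)

lemma mem_children {w v : T.V} : w ∈ T.children v ↔ T.parent w = v ∧ w ≠ T.root := by
  simp [GrowingTree.children, Set.Finite.mem_toFinset, Set.mem_setOf_eq]

lemma depth_eq_zero_iff {v : T.V} : T.depth v = 0 ↔ v = T.root := by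
  rw [GrowingTree.depth, Nat.find_eq_zero]
  simp

lemma depth_parent_lt {v : T.V} (hv : v ≠ T.root) : T.depth (T.parent v) < T.depth v := by
  have h0 : T.depth v ≠ 0 := fun h => hv (depth_eq_zero_iff T |>.1 h)
  have hs : T.parent^[T.depth v - 1] (T.parent v) = T.root := by
    rw [← Function.iterate_succ_apply, show (T.depth v - 1).succ = T.depth v from by omega]
    exact Nat.find_spec (T.reaches_root v)
  have : T.depth (T.parent v) ≤ T.depth v - 1 := Nat.find_min' _ hs
  exact lt_of_le_of_lt this (Nat.sub_lt (Nat.pos_of_ne_zero h0) one_pos)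

lemma parent_ne_self {v : T.V} (hv : v ≠ T.root) : T.parent v ≠ v := by
  intro h
  apply hv
  obtain ⟨n, hn⟩ := T.reaches_root v
  have hfix : ∀ k, T.parent^[k] v = v := by
    intro k
    induction k with
    | zero => rfl
    | succ k ih => rw [Function.iterate_succ_apply, h, ih]
  rw [hfix n] at hn; exact hn

lemma iterate_root (k : ℕ) : T.parent^[k] T.root = T.root := by
  induction k with
  | zero => rfl
  | succ k ih => rw [Function.iterate_succ_apply, T.parent_root, ih]

variable (κ : T.V → ℝ≥0)

/-- truncated-at-fuel-`k` max flow through vertex `v`. -/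
noncomputable def gcap : ℕ → T.V → ℝ≥0
  | 0, v => κ v
  | (k+1), v => min (κ v) (∑ w ∈ T.children v, gcap k w)

lemma gcap_succ_le : ∀ k v, gcap T κ (k+1) v ≤ gcap T κ k v := by
  intro k
  induction k with
  | zero => intro v; exact min_le_left _ _
  | succ k ih =>
    intro v
    exact min_le_min le_rfl (Finset.sum_le_sum fun w _ => ih w)

lemma gcap_anti (v : T.V) : Antitone (fun k => gcap T κ k v) :=
  antitone_nat_of_succ_le fun k => gcap_succ_le T κ k v

/-- The limiting max-flow profile. -/
noncomputable def theta (v : T.V) : ℝ≥0 := ⨅ k, gcap T κ k v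

lemma tendsto_gcap (v : T.V) :
    Tendsto (fun k => gcap T κ k v) atTop (𝓝 (theta T κ v)) :=
  tendsto_atTop_ciInf (gcap_anti T κ v) (OrderBot.bddBelow _)

lemma theta_eq (v : T.V) :
    theta T κ v = min (κ v) (∑ w ∈ T.children v, theta T κ w) := by
  have h1 : Tendsto (fun k => gcap T κ (k+1) v) atTop (𝓝 (theta T κ v)) :=
    (tendsto_gcap T κ v).comp (tendsto_add_atTop_nat 1)
  have h2 : Tendsto (fun k => min (κ v) (∑ w ∈ T.children v, gcap T κ k w)) atTop
      (𝓝 (min (κ v) (∑ w ∈ T.children v, theta T κ w))) :=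
    tendsto_const_nhds.min (tendsto_finset_sum _ fun w _ => tendsto_gcap T κ w)
  exact tendsto_nhds_unique h1 h2

lemma theta_le_kappa (v : T.V) : theta T κ v ≤ κ v :=
  ciInf_le (OrderBot.bddBelow _) 0

lemma theta_le_sum (v : T.V) : theta T κ v ≤ ∑ w ∈ T.children v, theta T κ w := by
  rw [theta_eq]; exact min_le_right _ _

/-- The actual flow, distributing `theta` proportionally down the tree. -/
noncomputable def phi : T.V → ℝ≥0 := fun v =>
  if h : v = T.root then ∑ w ∈ T.children T.root, theta T κ w
  else theta T κ v *
    (phi (T.parent v) / ∑ u ∈ T.children (T.parent v), theta T κ u)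
termination_by v => T.depth v
decreasing_by exact depth_parent_lt T h

lemma phi_root : phi T κ T.root = ∑ w ∈ T.children T.root, theta T κ w := by
  rw [phi]; simp

lemma phi_ne_root {v : T.V} (hv : v ≠ T.root) :
    phi T κ v = theta T κ v *
      (phi T κ (T.parent v) / ∑ u ∈ T.children (T.parent v), theta T κ u) := by
  rw [phi]; simp [hv]

lemma phi_le_sum : ∀ v, phi T κ v ≤ ∑ w ∈ T.children v, theta T κ w := by
  suffices h : ∀ n v, T.depth v ≤ n → phi T κ v ≤ ∑ w ∈ T.children v, theta T κ w by
    intro v; exact h (T.depth v) v le_rfl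
  intro n
  induction n with
  | zero =>
    intro v hv
    have : v = T.root := (depth_eq_zero_iff T).1 (Nat.le_zero.1 hv)
    subst this
    rw [phi_root]
  | succ n ih =>
    intro v hv
    by_cases hr : v = T.root
    · subst hr; rw [phi_root]
    · rw [phi_ne_root T κ hr]
      set D := ∑ u ∈ T.children (T.parent v), theta T κ u with hD
      by_cases hD0 : D = 0
      · rw [hD0, div_zero, mul_zero]; exact zero_le
      · have hp : phi T κ (T.parent v) ≤ D := by
          apply ih
          have := depth_parent_lt T hr
          omega
        have hdiv : phi T κ (T.parent v) / D ≤ 1 := by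
          rw [div_le_iff₀ (lt_of_le_of_ne zero_le (Ne.symm hD0)), one_mul]; exact hp
        calc theta T κ v * (phi T κ (T.parent v) / D) ≤ theta T κ v * 1 :=
              mul_le_mul_right hdiv _
        _ = theta T κ v := mul_one _
        _ ≤ _ := theta_le_sum T κ v

lemma phi_le_theta {v : T.V} (hv : v ≠ T.root) : phi T κ v ≤ theta T κ v := by
  rw [phi_ne_root T κ hv]
  set D := ∑ u ∈ T.children (T.parent v), theta T κ u with hD
  by_cases hD0 : D = 0
  · rw [hD0, div_zero, mul_zero]; exact zero_le
  · have hdiv : phi T κ (T.parent v) / D ≤ 1 := by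
      rw [div_le_iff₀ (lt_of_le_of_ne zero_le (Ne.symm hD0)), one_mul]
      exact phi_le_sum T κ (T.parent v)
    calc theta T κ v * (phi T κ (T.parent v) / D) ≤ theta T κ v * 1 :=
          mul_le_mul_right hdiv _
    _ = theta T κ v := mul_one _

lemma phi_isFlow : T.IsFlow (phi T κ) := by
  intro v
  set D := ∑ u ∈ T.children v, theta T κ u with hD
  have hw : ∀ w ∈ T.children v, phi T κ w = theta T κ w * (phi T κ v / D) := by
    intro w hwmem
    obtain ⟨hp, hr⟩ := (mem_children T).1 hwmem
    rw [phi_ne_root T κ hr, hp]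
  rw [Finset.sum_congr rfl hw, ← Finset.sum_mul, ← hD]
  by_cases hD0 : D = 0
  · have h0 : phi T κ v = 0 :=
      le_antisymm ((phi_le_sum T κ v).trans (by rw [← hD]; exact hD0.le)) zero_le
    rw [h0, hD0, zero_div, mul_zero]
  · rw [mul_comm, div_mul_cancel₀ _ hD0]

lemma phi_respects : T.Respects (phi T κ) κ := fun v hv =>
  (phi_le_theta T κ hv).trans (theta_le_kappa T κ v)

/-- Approximate minimal cutsets below a vertex. -/
noncomputable def cutF : ℕ → T.V → Finset T.V
  | 0, v => {v}
  | (k+1), v =>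
    if κ v ≤ ∑ w ∈ T.children v, gcap T κ k w then {v}
    else (T.children v).biUnion (cutF k)

lemma cutF_sum_le : ∀ k v, ∑ x ∈ cutF T κ k v, κ x ≤ gcap T κ k v := by
  intro k
  induction k with
  | zero => intro v; simp [cutF, gcap]
  | succ k ih =>
    intro v
    by_cases h : κ v ≤ ∑ w ∈ T.children v, gcap T κ k w
    · simp only [cutF, if_pos h, gcap, Finset.sum_singleton]
      exact le_min le_rfl h
    · simp only [cutF, if_neg h, gcap]
      calc ∑ x ∈ (T.children v).biUnion (cutF T κ k), κ x
          ≤ ∑ w ∈ T.children v, ∑ x ∈ cutF T κ k w, κ x := sum_biUnion_le _ _ _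
      _ ≤ ∑ w ∈ T.children v, gcap T κ k w := Finset.sum_le_sum fun w _ => ih w
      _ ≤ min (κ v) (∑ w ∈ T.children v, gcap T κ k w) :=
            le_min (le_of_not_ge h) le_rfl

lemma cutF_ne_root : ∀ k v, v ≠ T.root → ∀ x ∈ cutF T κ k v, x ≠ T.root := by
  intro k
  induction k with
  | zero =>
    intro v hv x hx
    rw [cutF, Finset.mem_singleton] at hx
    exact hx ▸ hv
  | succ k ih =>
    intro v hv x hx
    rw [cutF] at hx
    by_cases h : κ v ≤ ∑ w ∈ T.children v, gcap T κ k w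
    · rw [if_pos h, Finset.mem_singleton] at hx
      exact hx ▸ hv
    · rw [if_neg h, Finset.mem_biUnion] at hx
      obtain ⟨w, hwmem, hxw⟩ := hx
      exact ih w ((mem_children T).1 hwmem).2 x hxw

lemma cutF_hits : ∀ k (r : ℕ → T.V), T.IsRay r → ∀ i v, r (i+1) = v →
    ∃ m, r (m+1) ∈ cutF T κ k v := by
  intro k
  induction k with
  | zero =>
    intro r hr i v hv
    exact ⟨i, by rw [cutF, Finset.mem_singleton, hv]⟩
  | succ k ih =>
    intro r hr i v hv
    rw [cutF]
    by_cases h : κ v ≤ ∑ w ∈ T.children v, gcap T κ k w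
    · exact ⟨i, by rw [if_pos h, Finset.mem_singleton, hv]⟩
    · rw [if_neg h]
      have hmem : r (i+2) ∈ T.children v := by
        rw [mem_children]
        refine ⟨?_, (hr.2 (i+1)).2⟩
        rw [show i + 2 = (i+1) + 1 by ring] at *
        rw [(hr.2 (i+1)).1, hv]
      obtain ⟨m, hm⟩ := ih r hr (i+1) (r (i+2)) rfl
      exact ⟨m, Finset.mem_biUnion.2 ⟨r (i+2), hmem, hm⟩⟩

/-- The level-`k` cut from the root, as a cutset. -/
noncomputable def rootCut (k : ℕ) : Finset T.V := (T.children T.root).biUnion (cutF T κ k)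

lemma rootCut_isCutset (k : ℕ) : T.IsCutset (↑(rootCut T κ k) : Set T.V) := by
  constructor
  · intro h
    rw [Finset.mem_coe, rootCut, Finset.mem_biUnion] at h
    obtain ⟨w, hw, hmem⟩ := h
    exact cutF_ne_root T κ k w ((mem_children T).1 hw).2 _ hmem rfl
  · intro r hr
    have h1 : r 1 ∈ T.children T.root := by
      rw [mem_children]
      exact ⟨by rw [(hr.2 0).1, hr.1], (hr.2 0).2⟩
    obtain ⟨m, hm⟩ := cutF_hits T κ k r hr 0 (r 1) rfl
    exact ⟨m, Finset.mem_coe.2 (Finset.mem_biUnion.2 ⟨r 1, h1, hm⟩)⟩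

lemma rootCut_sum_le (k : ℕ) :
    T.cutsetSum κ (↑(rootCut T κ k)) ≤ ∑ w ∈ T.children T.root, (gcap T κ k w : ℝ≥0∞) := by
  rw [GrowingTree.cutsetSum, Finset.tsum_subtype' (rootCut T κ k) (fun v => (κ v : ℝ≥0∞)),
    ← ENNReal.coe_finset_sum, ← ENNReal.coe_finset_sum, ENNReal.coe_le_coe, rootCut]
  exact (sum_biUnion_le _ _ _).trans (Finset.sum_le_sum fun w _ => cutF_sum_le T κ k w)

lemma strength_ge :
    (⨅ (C : Set T.V) (_ : T.IsCutset C), T.cutsetSum κ C) ≤ (phi T κ T.root : ℝ≥0∞) := by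
  have h1 : ∀ k, (⨅ (C : Set T.V) (_ : T.IsCutset C), T.cutsetSum κ C)
      ≤ ((∑ w ∈ T.children T.root, gcap T κ k w : ℝ≥0) : ℝ≥0∞) := by
    intro k
    refine le_trans (iInf₂_le _ (rootCut_isCutset T κ k)) ?_
    rw [ENNReal.coe_finset_sum]
    exact rootCut_sum_le T κ k
  have h2 : (⨅ (C : Set T.V) (_ : T.IsCutset C), T.cutsetSum κ C)
      ≤ ⨅ k, ((∑ w ∈ T.children T.root, gcap T κ k w : ℝ≥0) : ℝ≥0∞) := le_iInf h1
  rw [← ENNReal.coe_iInf] at h2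
  refine h2.trans (ENNReal.coe_le_coe.2 ?_)
  have hsum_anti : Antitone (fun k => ∑ w ∈ T.children T.root, gcap T κ k w) :=
    fun a b hab => Finset.sum_le_sum fun w _ => gcap_anti T κ w hab
  have t1 : Tendsto (fun k => ∑ w ∈ T.children T.root, gcap T κ k w) atTop
      (𝓝 (⨅ k, ∑ w ∈ T.children T.root, gcap T κ k w)) :=
    tendsto_atTop_ciInf hsum_anti (OrderBot.bddBelow _)
  have t2 : Tendsto (fun k => ∑ w ∈ T.children T.root, gcap T κ k w) atTop
      (𝓝 (∑ w ∈ T.children T.root, theta T κ w)) :=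
    tendsto_finset_sum _ fun w _ => tendsto_gcap T κ w
  rw [tendsto_nhds_unique t1 t2, phi_root]

/-- The (child-)boundary of a finite set of vertices. -/
noncomputable def bdry (F : Finset T.V) : Finset T.V :=
  F.biUnion (fun v => (T.children v).filter (fun w => w ∉ F))

lemma mem_bdry {F : Finset T.V} {w : T.V} :
    w ∈ bdry T F ↔ T.parent w ∈ F ∧ w ∉ F ∧ w ≠ T.root := by
  simp only [bdry, Finset.mem_biUnion, Finset.mem_filter, mem_children]
  constructor
  · rintro ⟨v, hvF, ⟨hp, hwr⟩, hnF⟩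
    exact ⟨hp ▸ hvF, hnF, hwr⟩
  · rintro ⟨hpF, hnF, hwr⟩
    exact ⟨T.parent w, hpF, ⟨rfl, hwr⟩, hnF⟩

lemma flow_le_bdry (θ' : T.V → ℝ≥0) (hf : T.IsFlow θ') :
    ∀ (F : Finset T.V), T.root ∈ F → (∀ v ∈ F, T.parent v ∈ F) →
      θ' T.root ≤ ∑ w ∈ bdry T F, θ' w := by
  suffices h : ∀ n (F : Finset T.V), F.card ≤ n → T.root ∈ F →
      (∀ v ∈ F, T.parent v ∈ F) → θ' T.root ≤ ∑ w ∈ bdry T F, θ' w by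
    exact fun F h1 h2 => h F.card F le_rfl h1 h2
  intro n
  induction n with
  | zero =>
    intro F hcard hroot _
    exact absurd (Finset.card_eq_zero.1 (Nat.le_zero.1 hcard))
      (Finset.ne_empty_of_mem hroot)
  | succ n ih =>
    intro F hcard hroot hclosed
    by_cases hall : ∀ v ∈ F, v = T.root
    · have hF : F = {T.root} := Finset.eq_singleton_iff_unique_mem.2 ⟨hroot, hall⟩
      have hbd : bdry T F = T.children T.root := by
        ext w
        rw [mem_bdry, hF]
        simp only [Finset.mem_singleton, mem_children]
        constructor
        · rintro ⟨h1, h2, h3⟩; exact ⟨h1, h3⟩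
        · rintro ⟨h1, h2⟩; exact ⟨h1, h2, h2⟩
      rw [hbd]
      exact le_of_eq (hf T.root)
    · push_neg at hall
      obtain ⟨u, huF, hune⟩ := hall
      obtain ⟨v, hvF, hvmax⟩ := Finset.exists_max_image F T.depth ⟨u, huF⟩
      have hvroot : v ≠ T.root := by
        intro h
        apply hune
        rw [← depth_eq_zero_iff T]
        have h0 : T.depth v = 0 := by rw [h]; exact (depth_eq_zero_iff T).2 rfl
        have := hvmax u huF
        omega
      have hchild_not : ∀ w ∈ T.children v, w ∉ F := by
        intro w hw hwF
        obtain ⟨hp, hwr⟩ := (mem_children T).1 hw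
        have h1 : T.depth v < T.depth w := by
          have := depth_parent_lt T (v := w) hwr
          rwa [hp] at this
        exact absurd (hvmax w hwF) (not_le.2 h1)
      set F' := F.erase v with hF'
      have hrootF' : T.root ∈ F' := Finset.mem_erase.2 ⟨Ne.symm hvroot, hroot⟩
      have hclosed' : ∀ x ∈ F', T.parent x ∈ F' := by
        intro x hx
        obtain ⟨hxv, hxF⟩ := Finset.mem_erase.1 hx
        refine Finset.mem_erase.2 ⟨?_, hclosed x hxF⟩
        intro hpx
        by_cases hxr : x = T.root
        · exact hvroot (by rw [← hpx, hxr, T.parent_root])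
        · have h1 : T.depth v < T.depth x := by
            have := depth_parent_lt T (v := x) hxr
            rwa [hpx] at this
          exact absurd (hvmax x hxF) (not_le.2 h1)
      have hcard' : F'.card ≤ n := by
        rw [hF', Finset.card_erase_of_mem hvF]
        omega
      have IH := ih F' hcard' hrootF' hclosed'
      have hbd : bdry T F' = insert v (bdry T F \ T.children v) := by
        ext x
        constructor
        · intro hx
          obtain ⟨hp, hnx, hxr⟩ := (mem_bdry T).1 hx
          rcases em (x = v) with h | h
          · exact Finset.mem_insert.2 (Or.inl h)
          · refine Finset.mem_insert.2 (Or.inr (Finset.mem_sdiff.2 ⟨?_, ?_⟩))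
            · refine (mem_bdry T).2 ⟨(Finset.mem_erase.1 hp).2, ?_, hxr⟩
              intro hxF
              exact hnx (Finset.mem_erase.2 ⟨h, hxF⟩)
            · intro hxc
              exact (Finset.mem_erase.1 hp).1 ((mem_children T).1 hxc).1
        · intro hx
          rcases Finset.mem_insert.1 hx with h | h
          · subst h
            refine (mem_bdry T).2 ⟨?_, ?_, hvroot⟩
            · exact Finset.mem_erase.2 ⟨parent_ne_self T hvroot, hclosed x hvF⟩
            · exact Finset.notMem_erase x F
          · obtain ⟨hb, hnc⟩ := Finset.mem_sdiff.1 h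
            obtain ⟨hpF, hxF, hxr⟩ := (mem_bdry T).1 hb
            refine (mem_bdry T).2 ⟨?_, ?_, hxr⟩
            · refine Finset.mem_erase.2 ⟨?_, hpF⟩
              intro hpv
              exact hnc ((mem_children T).2 ⟨hpv, hxr⟩)
            · intro hxF'
              exact hxF (Finset.mem_of_mem_erase hxF')
      have hvnot : v ∉ bdry T F \ T.children v := by
        intro h
        exact ((mem_bdry T).1 (Finset.mem_sdiff.1 h).1).2.1 hvF
      rw [hbd, Finset.sum_insert hvnot] at IH
      have hsub : T.children v ⊆ bdry T F := by
        intro w hw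
        obtain ⟨hp, hwr⟩ := (mem_children T).1 hw
        exact (mem_bdry T).2 ⟨hp ▸ hvF, hchild_not w hw, hwr⟩
      calc θ' T.root ≤ θ' v + ∑ w ∈ bdry T F \ T.children v, θ' w := IH
      _ = (∑ w ∈ T.children v, θ' w) + ∑ w ∈ bdry T F \ T.children v, θ' w := by
            rw [← hf v]
      _ = ∑ w ∈ bdry T F, θ' w := by rw [add_comm, Finset.sum_sdiff hsub]

lemma flow_le_cutsetSum (θ' : T.V → ℝ≥0) (hf : T.IsFlow θ') (hresp : T.Respects θ' κ)
    (C : Set T.V) (hC : T.IsCutset C) : (θ' T.root : ℝ≥0∞) ≤ T.cutsetSum κ C := by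
  classical
  set A : Set T.V := {v | ∀ k, T.parent^[k] v ∉ C} with hA
  have hAclosed : ∀ v ∈ A, T.parent v ∈ A := by
    intro v hv k
    rw [← Function.iterate_succ_apply]
    exact hv (k + 1)
  have hAiter : ∀ u ∈ A, ∀ k, T.parent^[k] u ∈ A := by
    intro u hu k j
    rw [← Function.iterate_add_apply]
    exact hu (j + k)
  have hrootA : T.root ∈ A := by
    intro k
    rw [iterate_root]
    exact hC.1
  have hAfin : A.Finite := by
    by_contra hinf
    have hinf : A.Infinite := hinf
    set desc : T.V → Set T.V := fun v => {u | ∃ k, T.parent^[k] u = v} with hdesc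
    have hdesc_root : A ∩ desc T.root = A := by
      apply Set.inter_eq_self_of_subset_left
      intro u _
      exact T.reaches_root u
    have key : ∀ v, (A ∩ desc v).Infinite →
        ∃ w, (T.parent w = v ∧ w ≠ T.root) ∧ (A ∩ desc w).Infinite := by
      intro v hv
      by_contra hno
      push_neg at hno
      have hsub : A ∩ desc v ⊆ {v} ∪ ⋃ w ∈ (T.children v : Set T.V), (A ∩ desc w) := by
        rintro u ⟨huA, k, hk⟩
        have hex : ∃ m, T.parent^[m] u = v := ⟨k, hk⟩
        set m := Nat.find hex with hm
        have hmspec : T.parent^[m] u = v := Nat.find_spec hex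
        rcases Nat.eq_zero_or_pos m with h0 | hpos
        · left
          rw [h0] at hmspec
          exact hmspec
        · right
          obtain ⟨j, hj⟩ := Nat.exists_eq_succ_of_ne_zero (Nat.pos_iff_ne_zero.1 hpos)
          set w := T.parent^[j] u with hw
          have hpw : T.parent w = v := by
            have h1 : T.parent^[j + 1] u = v := by
              rw [← Nat.succ_eq_add_one, ← hj]
              exact hmspec
            rw [Function.iterate_succ_apply'] at h1
            rw [hw]
            exact h1
          have hwr : w ≠ T.root := by
            intro h
            have hvr : v = T.root := by rw [← hpw, h, T.parent_root]
            have : T.parent^[j] u = v := by rw [hvr, ← hw]; exact h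
            exact Nat.find_min hex (by omega) this
          refine Set.mem_biUnion ?_ ⟨huA, j, rfl⟩
          rw [Finset.mem_coe, mem_children]
          exact ⟨hpw, hwr⟩
      have hfin : ({v} ∪ ⋃ w ∈ (T.children v : Set T.V), (A ∩ desc w) : Set T.V).Finite := by
        apply Set.Finite.union (Set.finite_singleton v)
        apply Set.Finite.biUnion (T.children v).finite_toSet
        intro w hw
        rw [Finset.mem_coe, mem_children] at hw
        rw [← Set.not_infinite]
        exact Set.not_infinite.2 (hno w hw)
      exact (hv.mono hsub) hfin
    have hstep : ∀ p : {v : T.V // (A ∩ desc v).Infinite},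
        ∃ w, (T.parent w = p.1 ∧ w ≠ T.root) ∧ (A ∩ desc w).Infinite :=
      fun p => key p.1 p.2
    let next : {v : T.V // (A ∩ desc v).Infinite} → {v : T.V // (A ∩ desc v).Infinite} :=
      fun p => ⟨(hstep p).choose, (hstep p).choose_spec.2⟩
    have hnext : ∀ p, T.parent (next p).1 = p.1 ∧ (next p).1 ≠ T.root :=
      fun p => (hstep p).choose_spec.1
    have hx0inf : (A ∩ desc T.root).Infinite := by rw [hdesc_root]; exact hinf
    set x0 : {v : T.V // (A ∩ desc v).Infinite} := ⟨T.root, hx0inf⟩ with hx0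
    set r : ℕ → T.V := fun n => (next^[n] x0).1 with hrdef
    have hray : T.IsRay r := by
      constructor
      · show (next^[0] x0).1 = T.root
        rw [Function.iterate_zero_apply]
      · intro n
        have hit : next^[n+1] x0 = next (next^[n] x0) := Function.iterate_succ_apply' next n x0
        show T.parent (next^[n+1] x0).1 = (next^[n] x0).1 ∧ (next^[n+1] x0).1 ≠ T.root
        rw [hit]
        exact hnext (next^[n] x0)
    obtain ⟨n, hn⟩ := hC.2 r hray
    have hrA : r (n + 1) ∈ A := by
      have hinf' : (A ∩ desc (r (n+1))).Infinite := (next^[n+1] x0).2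
      obtain ⟨u, ⟨huA, k, hk⟩⟩ := hinf'.nonempty
      rw [← hk]
      exact hAiter u huA k
    exact hrA 0 hn
  set F : Finset T.V := hAfin.toFinset with hFdef
  have hrootF : T.root ∈ F := hAfin.mem_toFinset.2 hrootA
  have hclosedF : ∀ v ∈ F, T.parent v ∈ F := by
    intro v hv
    exact hAfin.mem_toFinset.2 (hAclosed v (hAfin.mem_toFinset.1 hv))
  have hb := flow_le_bdry T θ' hf F hrootF hclosedF
  have hbC : ∀ w ∈ bdry T F, w ∈ C := by
    intro w hw
    obtain ⟨hpF, hnF, hwr⟩ := (mem_bdry T).1 hw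
    have hpA : T.parent w ∈ A := hAfin.mem_toFinset.1 hpF
    have hnA : w ∉ A := fun h => hnF (hAfin.mem_toFinset.2 h)
    rw [hA, Set.mem_setOf_eq] at hnA
    push_neg at hnA
    obtain ⟨k, hk⟩ := hnA
    rcases k with _ | k
    · exact hk
    · rw [Function.iterate_succ_apply] at hk
      exact absurd hk (hpA k)
  calc ((θ' T.root : ℝ≥0) : ℝ≥0∞) ≤ ((∑ w ∈ bdry T F, θ' w : ℝ≥0) : ℝ≥0∞) :=
        ENNReal.coe_le_coe.2 hb
  _ = ∑ w ∈ bdry T F, (θ' w : ℝ≥0∞) := ENNReal.coe_finset_sum _ _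
  _ ≤ ∑ w ∈ bdry T F, (κ w : ℝ≥0∞) := Finset.sum_le_sum fun w hw =>
        ENNReal.coe_le_coe.2 (hresp w ((mem_bdry T).1 hw).2.2)
  _ = ∑ w ∈ bdry T F, C.indicator (fun v => (κ v : ℝ≥0∞)) w :=
        Finset.sum_congr rfl fun w hw => (Set.indicator_of_mem (hbC w hw) (fun v => (κ v : ℝ≥0∞))).symm
  _ ≤ ∑' w, C.indicator (fun v => (κ v : ℝ≥0∞)) w := ENNReal.sum_le_tsum _
  _ = T.cutsetSum κ C := (tsum_subtype C (fun v => (κ v : ℝ≥0∞))).symm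

end MFMC


/-- The enhanced Max-Flow Min-Cut theorem on a locally finite rooted tree: the maximal flow
from the root to infinity equals the infimum of the total capacities of cutsets separating
the root from infinity. -/
theorem maxFlow_eq_iInf_cutsetSum (T : GrowingTree) (κ : T.V → ℝ≥0) :
    T.maxFlow κ = ⨅ (C : Set T.V) (_ : T.IsCutset C), T.cutsetSum κ C := by
  apply le_antisymm
  · rw [GrowingTree.maxFlow]
    apply iSup_le
    rintro ⟨θ', hf, hr⟩
    apply le_iInf
    intro C
    apply le_iInf
    intro hC
    exact MFMC.flow_le_cutsetSum T κ θ' hf hr C hC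
  · refine (MFMC.strength_ge T κ).trans ?_
    rw [GrowingTree.maxFlow]
    exact le_iSup_of_le ⟨MFMC.phi T κ, MFMC.phi_isFlow T κ, MFMC.phi_respects T κ⟩ le_rfl
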